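/- Let L_k (k ≥ −1) be operators on a vector space W satisfying [R_{−1}, L_k] = (k+1) L_{k−1} for all k ≥ 0 and [R_{−1}, L_{−1}] = 0, where R_{−1} is locally nilpotent on W. Define L_inv = ∑_{j≥−1} ((−1)^j/(j+1)!) L_j R_{−1}^{j+1} (a finite sum on each element by local nilpotence). Then R_{−1} ∘ L_inv = 0. -/

import Mathlib

/-- R_{−1} ∘ L_inv = 0, where
L_inv = ∑_{j≥−1} ((−1)^j/(j+1)!) L_j R_{−1}^{j+1} (a finite sum on each element
by local nilpotence of R_{−1}; reindexed by m = j+1). -/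
theorem stmt_8 (F : Type*) [Field F] [CharZero F]
    (W : Type*) [AddCommGroup W] [Module F W]
    (R : W →ₗ[F] W) (L : ℤ → W →ₗ[F] W)
    (hnil : ∀ w : W, ∃ N : ℕ, (⇑R)^[N] w = 0)
    (hbr : ∀ k : ℤ, -1 ≤ k → ∀ w : W,
      R (L k w) - L k (R w) = ((k + 1 : ℤ) : F) • L (k - 1) w)
    (w : W) (N : ℕ) (hN : (⇑R)^[N] w = 0) :
    R (∑ m ∈ Finset.range N,
        ((-1 : F) ^ (m + 1) / (m.factorial : F)) • L ((m : ℤ) - 1) ((⇑R)^[m] w)) = 0 := by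
  set e : ℕ → W := fun m =>
    ((-1 : F) ^ (m + 1) / (m.factorial : F)) • L ((m : ℤ) - 1) ((⇑R)^[m + 1] w) with he
  set e' : ℕ → W := fun m => match m with
    | 0 => 0
    | (k + 1) => e k with he'
  have key : ∀ m : ℕ,
      R (((-1 : F) ^ (m + 1) / (m.factorial : F)) • L ((m : ℤ) - 1) ((⇑R)^[m] w))
        = e' (m + 1) - e' m := by
    intro m
    have hb := hbr ((m : ℤ) - 1) (by omega) ((⇑R)^[m] w)
    have hb' : R (L ((m : ℤ) - 1) ((⇑R)^[m] w))
        = L ((m : ℤ) - 1) ((⇑R)^[m + 1] w) + ((m : ℤ) : F) • L ((m : ℤ) - 2) ((⇑R)^[m] w) := by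
      have h1 : ((m : ℤ) - 1 + 1) = (m : ℤ) := by ring
      have h2 : ((m : ℤ) - 1 - 1) = (m : ℤ) - 2 := by ring
      rw [h1, h2, sub_eq_iff_eq_add] at hb
      rw [Function.iterate_succ_apply', hb, add_comm]
    rw [map_smul, hb', smul_add]
    match m with
    | 0 =>
      simp [he, he']
    | (k + 1) =>
      have hcoef : ((-1 : F) ^ (k + 1 + 1) / ((k + 1).factorial : F)) * (((k + 1 : ℕ) : ℤ) : F)
          = -((-1 : F) ^ (k + 1) / (k.factorial : F)) := by
        have hk : (k.factorial : F) ≠ 0 := Nat.cast_ne_zero.mpr k.factorial_ne_zero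
        have hk1 : ((k + 1 : ℕ) : F) ≠ 0 := Nat.cast_ne_zero.mpr (Nat.succ_ne_zero k)
        have hf : (((k + 1).factorial : ℕ) : F) = ((k : F) + 1) * (k.factorial : F) := by
          rw [Nat.factorial_succ]; push_cast; ring
        have hk1' : ((k : F) + 1) ≠ 0 := by push_cast at hk1; exact hk1
        rw [hf]
        field_simp
        push_cast
        ring
      have h2 : ((k + 1 : ℕ) : ℤ) - 2 = ((k : ℕ) : ℤ) - 1 := by push_cast; ring
      simp only [he, he', h2]
      rw [smul_smul, hcoef, neg_smul, ← sub_eq_add_neg]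
  rw [map_sum]
  have : ∀ m ∈ Finset.range N,
      R (((-1 : F) ^ (m + 1) / (m.factorial : F)) • L ((m : ℤ) - 1) ((⇑R)^[m] w))
        = e' (m + 1) - e' m := fun m _ => key m
  rw [Finset.sum_congr rfl this, Finset.sum_range_sub]
  match N with
  | 0 => simp [he']
  | (k + 1) =>
    simp only [he', he]
    rw [hN]
    simp
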